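/- Let n ≥ 1 and let X : ℝ → (n×n complex matrices) be differentiable at a point τ₀ with derivative X'(τ₀). Then the map τ ↦ exp(X(τ)) is differentiable at τ₀ with derivative exp(X(τ₀)) * (∑_{k=0}^∞ ((−1)^k/(k+1)!) • (ad_{X(τ₀)})^k(X'(τ₀))), where ad_A(Z) := A*Z − Z*A and (ad_A)^k denotes the k-fold iterate of ad_A. -/

import Mathlib

open scoped Matrix.Norms.L2Operator

namespace DexpAux
variable {n : ℕ}
local notation "E" => Matrix (Fin n) (Fin n) ℂ

/-- the truncated "sandwich" sum ∑_{i+j=m} A^i B A^j -/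
noncomputable def Sm (A B : E) (m : ℕ) : E := ∑ i ∈ Finset.range (m+1), A^i * B * A^(m-i)

lemma norm_mul_pow_right_le (B A : E) : ∀ j, ‖B * A^j‖ ≤ ‖B‖ * ‖A‖^j := by
  intro j
  induction j with
  | zero => simp
  | succ j ih =>
    rw [pow_succ, ← mul_assoc, pow_succ]
    calc ‖B * A ^ j * A‖ ≤ ‖B * A^j‖ * ‖A‖ := norm_mul_le _ _
    _ ≤ ‖B‖ * ‖A‖^j * ‖A‖ := by gcongr
    _ = ‖B‖ * (‖A‖^j * ‖A‖) := by ring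

lemma norm_pow_mul_left_le (A B : E) : ∀ i, ‖A^i * B‖ ≤ ‖A‖^i * ‖B‖ := by
  intro i
  induction i with
  | zero => simp
  | succ i ih =>
    rw [pow_succ', mul_assoc, pow_succ']
    calc ‖A * (A^i * B)‖ ≤ ‖A‖ * ‖A^i * B‖ := norm_mul_le _ _
    _ ≤ ‖A‖ * (‖A‖^i * ‖B‖) := by gcongr
    _ = ‖A‖ * ‖A‖^i * ‖B‖ := by ring

lemma norm_sandwich_le (A B : E) (i j : ℕ) : ‖A^i * B * A^j‖ ≤ ‖A‖^i * ‖B‖ * ‖A‖^j := by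
  calc ‖A^i * B * A^j‖ ≤ ‖A^i * B‖ * ‖A‖^j := norm_mul_pow_right_le _ _ _
  _ ≤ ‖A‖^i * ‖B‖ * ‖A‖^j :=
      mul_le_mul_of_nonneg_right (norm_pow_mul_left_le A B i) (by positivity)

lemma norm_Sm_le (A B : E) (m : ℕ) : ‖Sm A B m‖ ≤ (m+1) * (‖A‖^m * ‖B‖) := by
  unfold Sm
  calc ‖∑ i ∈ Finset.range (m+1), A^i * B * A^(m-i)‖
      ≤ ∑ i ∈ Finset.range (m+1), ‖A^i * B * A^(m-i)‖ := norm_sum_le _ _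
  _ ≤ ∑ i ∈ Finset.range (m+1), ‖A‖^m * ‖B‖ := by
      apply Finset.sum_le_sum
      intro i hi
      have hi' : i ≤ m := Nat.lt_succ_iff.mp (Finset.mem_range.mp hi)
      calc ‖A^i * B * A^(m-i)‖ ≤ ‖A‖^i * ‖B‖ * ‖A‖^(m-i) := norm_sandwich_le _ _ _ _
      _ = ‖A‖^m * ‖B‖ := by
          rw [mul_right_comm, ← pow_add, Nat.add_sub_cancel' hi']
  _ = (m+1) * (‖A‖^m * ‖B‖) := by
      rw [Finset.sum_const, Finset.card_range, nsmul_eq_mul]; push_cast; ring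

lemma Sm_zero (A B : E) : Sm A B 0 = B := by simp [Sm]

lemma Sm_succ (A H : E) (m : ℕ) : Sm A H (m+1) = A^(m+1) * H + Sm A H m * A := by
  unfold Sm
  rw [Finset.sum_range_succ, Finset.sum_mul]
  rw [Nat.sub_self, pow_zero, mul_one, add_comm]
  congr 1
  apply Finset.sum_congr rfl
  intro i hi
  have hi' : i ≤ m := Nat.lt_succ_iff.mp (Finset.mem_range.mp hi)
  rw [Nat.succ_sub hi', pow_succ, ← mul_assoc]

/-- second order remainder -/
noncomputable def tm (A H : E) (m : ℕ) : E := (A+H)^(m+1) - A^(m+1) - Sm A H m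

lemma tm_zero (A H : E) : tm A H 0 = 0 := by simp [tm, Sm_zero]

lemma tm_succ (A H : E) (m : ℕ) : tm A H (m+1) = tm A H m * (A+H) + Sm A H m * H := by
  unfold tm
  rw [Sm_succ]
  rw [show (m+1+1) = (m+1)+1 from rfl, pow_succ (A+H), pow_succ A]
  noncomm_ring

lemma real_aux (a h x y t : ℝ) (m : ℕ) (ha : 0 ≤ a) (hh : 0 ≤ h) (hx0 : 0 ≤ x)
    (hx : x ≤ h^2*(2*(a+h+1))^m) (hy : 0 ≤ y) (hy2 : y ≤ (m+1)*(a^m*h))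
    (ht : t ≤ x*(a+h) + y*h) : t ≤ h^2*(2*(a+h+1))^(m+1) := by
  have h2 : ((m:ℝ)+1) ≤ 2^m := by
    exact_mod_cast Nat.succ_le_of_lt (Nat.lt_two_pow_self (n := m))
  have h3 : a^m ≤ (a+h+1)^m := by
    apply pow_le_pow_left₀ ha; linarith
  have e1 : x*(a+h) ≤ (h^2*(2*(a+h+1))^m)*(a+h) :=
    mul_le_mul_of_nonneg_right hx (by linarith)
  have e2 : y*h ≤ ((2:ℝ)^m*((a+h+1)^m*h))*h := by
    apply mul_le_mul_of_nonneg_right _ hh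
    calc y ≤ (m+1)*(a^m*h) := hy2
    _ ≤ 2^m*((a+h+1)^m*h) := by
        apply mul_le_mul h2 (mul_le_mul_of_nonneg_right h3 hh) (by positivity) (by positivity)
  have key : (h^2*(2*(a+h+1))^m)*(a+h) + ((2:ℝ)^m*((a+h+1)^m*h))*h
      ≤ h^2*(2*(a+h+1))^(m+1) := by
    have base : (0:ℝ) ≤ h^2*(2*(a+h+1))^m := by positivity
    have expand : ((2:ℝ)^m*((a+h+1)^m*h))*h = h^2*(2*(a+h+1))^m := by
      rw [mul_pow]; ring
    rw [expand]
    calc h^2*(2*(a+h+1))^m*(a+h) + h^2*(2*(a+h+1))^m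
        = (h^2*(2*(a+h+1))^m) * ((a+h)+1) := by ring
    _ ≤ (h^2*(2*(a+h+1))^m) * (2*(a+h+1)) := mul_le_mul_of_nonneg_left (by linarith) base
    _ = h^2*(2*(a+h+1))^(m+1) := by rw [pow_succ]; ring
  linarith

lemma norm_tm_le (A H : E) (m : ℕ) :
    ‖tm A H m‖ ≤ ‖H‖^2 * (2*(‖A‖+‖H‖+1))^m := by
  induction m with
  | zero => simp [tm_zero]
  | succ m ih =>
    have n1 : ‖tm A H (m+1)‖ ≤ ‖tm A H m‖ * ‖A + H‖ + ‖Sm A H m‖ * ‖H‖ := by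
      rw [tm_succ]
      exact (norm_add_le _ _).trans (add_le_add (norm_mul_le _ _) (norm_mul_le _ _))
    have n2 : ‖tm A H m‖ * ‖A + H‖ ≤ ‖tm A H m‖ * (‖A‖ + ‖H‖) :=
      mul_le_mul_of_nonneg_left (norm_add_le _ _) (norm_nonneg _)
    exact real_aux ‖A‖ ‖H‖ ‖tm A H m‖ ‖Sm A H m‖ _ m (norm_nonneg _) (norm_nonneg _)
      (norm_nonneg _) ih (norm_nonneg _) (norm_Sm_le A H m)
      (by linarith)

lemma summable_fac_pow (x : ℝ) (c : ℝ) : Summable fun m : ℕ => x^m / m.factorial * c :=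
  (Real.summable_pow_div_factorial x).mul_right c

lemma norm_coef (m : ℕ) : ‖(((m+1).factorial : ℂ))⁻¹‖ = (((m+1).factorial : ℝ))⁻¹ := by
  rw [norm_inv]
  norm_num

lemma norm_coef_Sm_le (A B : E) (m : ℕ) :
    ‖(((m+1).factorial : ℂ))⁻¹ • Sm A B m‖ ≤ ‖A‖^m / m.factorial * ‖B‖ := by
  rw [norm_smul, norm_coef]
  have hfac : (0:ℝ) < ((m+1).factorial : ℝ) := by exact_mod_cast (m+1).factorial_pos
  calc (((m+1).factorial : ℝ))⁻¹ * ‖Sm A B m‖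
      ≤ (((m+1).factorial : ℝ))⁻¹ * ((m+1) * (‖A‖^m * ‖B‖)) := by
        apply mul_le_mul_of_nonneg_left (norm_Sm_le A B m) (by positivity)
  _ = ‖A‖^m / m.factorial * ‖B‖ := by
      rw [Nat.factorial_succ]
      field_simp
      push_cast; ring

lemma summable_norm_coef_Sm (A B : E) :
    Summable fun m => ‖(((m+1).factorial : ℂ))⁻¹ • Sm A B m‖ :=
  (summable_fac_pow ‖A‖ ‖B‖).of_nonneg_of_le (fun _ => norm_nonneg _) (norm_coef_Sm_le A B)

lemma summable_coef_Sm (A B : E) :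
    Summable fun m => (((m+1).factorial : ℂ))⁻¹ • Sm A B m :=
  (summable_norm_coef_Sm A B).of_norm

lemma Sm_add (A B C : E) (m : ℕ) : Sm A (B + C) m = Sm A B m + Sm A C m := by
  simp [Sm, mul_add, add_mul, Finset.sum_add_distrib]

lemma Sm_smul (A B : E) (r : ℝ) (m : ℕ) : Sm A (r • B) m = r • Sm A B m := by
  simp only [Sm, Finset.smul_sum]
  congr 1; ext i
  rw [mul_smul_comm, smul_mul_assoc]

/-- the derivative of exp at A, as a linear map -/
noncomputable def Llin (A : E) : E →ₗ[ℝ] E where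
  toFun B := ∑' m, (((m+1).factorial : ℂ))⁻¹ • Sm A B m
  map_add' B C := by
    simp only [Sm_add, smul_add]
    exact Summable.tsum_add (summable_coef_Sm A B) (summable_coef_Sm A C)
  map_smul' r B := by
    simp only [Sm_smul, RingHom.id_apply]
    have : ∀ m, (((m+1).factorial : ℂ))⁻¹ • (r • Sm A B m)
        = r • ((((m+1).factorial : ℂ))⁻¹ • Sm A B m) := fun m => smul_comm _ _ _
    simp only [this]
    exact ((summable_coef_Sm A B).hasSum.const_smul r).tsum_eq

noncomputable def Lc (A : E) : E →L[ℝ] E := LinearMap.toContinuousLinearMap (Llin A)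

lemma Lc_apply (A B : E) : Lc A B = ∑' m, (((m+1).factorial : ℂ))⁻¹ • Sm A B m := rfl

lemma key_diff (A H : E) :
    NormedSpace.exp (A + H) - NormedSpace.exp A - Lc A H
      = ∑' m, (((m+1).factorial : ℂ))⁻¹ • tm A H m := by
  have s1 : Summable fun m : ℕ => ((m.factorial : ℂ))⁻¹ • (A+H)^m :=
    NormedSpace.expSeries_summable' (A+H)
  have s2 : Summable fun m : ℕ => ((m.factorial : ℂ))⁻¹ • A^m :=
    NormedSpace.expSeries_summable' A
  have sdiff : Summable fun m : ℕ => ((m.factorial : ℂ))⁻¹ • ((A+H)^m - A^m) := by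
    simpa [smul_sub] using s1.sub s2
  have sshift : Summable fun m : ℕ => (((m+1).factorial : ℂ))⁻¹ • ((A+H)^(m+1) - A^(m+1)) :=
    sdiff.comp_injective Nat.succ_injective
  calc NormedSpace.exp (A + H) - NormedSpace.exp A - Lc A H
      = (∑' m : ℕ, ((m.factorial : ℂ))⁻¹ • (A+H)^m) - (∑' m : ℕ, ((m.factorial : ℂ))⁻¹ • A^m)
        - ∑' m, (((m+1).factorial : ℂ))⁻¹ • Sm A H m := by
        rw [Lc_apply]
        simp only [NormedSpace.exp_eq_tsum ℂ]
  _ = (∑' m : ℕ, ((m.factorial : ℂ))⁻¹ • ((A+H)^m - A^m))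
        - ∑' m, (((m+1).factorial : ℂ))⁻¹ • Sm A H m := by
        congr 1
        rw [← Summable.tsum_sub s1 s2]
        exact tsum_congr fun m => (smul_sub _ _ _).symm
  _ = (∑' m : ℕ, (((m+1).factorial : ℂ))⁻¹ • ((A+H)^(m+1) - A^(m+1)))
        - ∑' m, (((m+1).factorial : ℂ))⁻¹ • Sm A H m := by
        rw [Summable.tsum_eq_zero_add sdiff]
        simp
  _ = ∑' m, (((m+1).factorial : ℂ))⁻¹ • tm A H m := by
        rw [← Summable.tsum_sub sshift (summable_coef_Sm A H)]
        exact tsum_congr fun m => by simp only [tm, smul_sub]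

lemma norm_coef_tm_le (A H : E) (hH : ‖H‖ ≤ 1) (m : ℕ) :
    ‖(((m+1).factorial : ℂ))⁻¹ • tm A H m‖ ≤ (2*(‖A‖+2))^m / m.factorial * ‖H‖^2 := by
  rw [norm_smul, norm_coef]
  have h1 : ‖tm A H m‖ ≤ ‖H‖^2 * (2*(‖A‖+2))^m := by
    refine (norm_tm_le A H m).trans ?_
    apply mul_le_mul_of_nonneg_left _ (by positivity)
    apply pow_le_pow_left₀ (by positivity)
    linarith [norm_nonneg A]
  have h2 : (((m+1).factorial : ℝ))⁻¹ ≤ ((m.factorial : ℝ))⁻¹ := by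
    apply inv_anti₀
    · exact_mod_cast m.factorial_pos
    · exact_mod_cast Nat.factorial_le (Nat.le_succ m)
  calc (((m+1).factorial : ℝ))⁻¹ * ‖tm A H m‖
      ≤ ((m.factorial : ℝ))⁻¹ * (‖H‖^2 * (2*(‖A‖+2))^m) :=
        mul_le_mul h2 h1 (norm_nonneg _) (by positivity)
  _ = (2*(‖A‖+2))^m / m.factorial * ‖H‖^2 := by ring

lemma hasFDerivAt_exp (A : E) : HasFDerivAt (NormedSpace.exp) (Lc A) A := by
  rw [hasFDerivAt_iff_isLittleO_nhds_zero]
  refine Asymptotics.IsBigO.trans_isLittleO ?_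
    (Asymptotics.isLittleO_norm_pow_id (E' := Matrix (Fin n) (Fin n) ℂ) one_lt_two)
  rw [Asymptotics.isBigO_iff]
  refine ⟨∑' m : ℕ, (2*(‖A‖+2))^m / m.factorial, ?_⟩
  filter_upwards [Metric.closedBall_mem_nhds (0:E) one_pos] with H hH
  rw [mem_closedBall_zero_iff] at hH
  rw [key_diff]
  have hsum : Summable fun m : ℕ => (2*(‖A‖+2))^m / m.factorial * ‖H‖^2 := by
    have := (Real.summable_pow_div_factorial (2*(‖A‖+2))).mul_right (‖H‖^2)
    exact this
  have hnorm : Summable fun m => ‖(((m+1).factorial : ℂ))⁻¹ • tm A H m‖ :=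
    hsum.of_nonneg_of_le (fun _ => norm_nonneg _) (norm_coef_tm_le A H hH)
  calc ‖∑' m, (((m+1).factorial : ℂ))⁻¹ • tm A H m‖
      ≤ ∑' m, ‖(((m+1).factorial : ℂ))⁻¹ • tm A H m‖ := norm_tsum_le_tsum_norm hnorm
  _ ≤ ∑' m : ℕ, (2*(‖A‖+2))^m / m.factorial * ‖H‖^2 :=
      Summable.tsum_le_tsum (norm_coef_tm_le A H hH) hnorm hsum
  _ = (∑' m : ℕ, (2*(‖A‖+2))^m / m.factorial) * ‖H‖^2 := tsum_mul_right
  _ ≤ (∑' m : ℕ, (2*(‖A‖+2))^m / m.factorial) * ‖(‖H‖^2 : ℝ)‖ := by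
      rw [Real.norm_eq_abs, abs_of_nonneg (by positivity)]

/-- ad_A as a linear endomorphism -/
noncomputable def adE (A : E) : Module.End ℂ (Matrix (Fin n) (Fin n) ℂ) :=
  LinearMap.mulLeft ℂ A - LinearMap.mulRight ℂ A

lemma adE_apply (A Z : E) : adE A Z = A * Z - Z * A := rfl

lemma ad_iter_eq_pow (A B : E) (k : ℕ) :
    (fun Z : E => A * Z - Z * A)^[k] B = ((adE A)^k) B := by
  induction k with
  | zero => simp
  | succ k ih =>
    rw [Function.iterate_succ_apply', ih, pow_succ', Module.End.mul_apply, adE_apply]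

lemma commute_l_ad (A : E) :
    Commute (LinearMap.mulLeft ℂ A) (adE A) :=
  (Commute.refl _).sub_right (LinearMap.commute_mulLeft_right A A)

lemma neg_pow_smul (x : Module.End ℂ (Matrix (Fin n) (Fin n) ℂ)) (k : ℕ) :
    (-x)^k = ((-1:ℂ)^k) • x^k := by
  rw [← neg_one_smul ℂ x, smul_pow]

/-- key binomial lemma: r^(N+1) as combination of l-powers and ad-powers -/
lemma r_pow_eq (A : E) (N : ℕ) :
    (LinearMap.mulRight ℂ A)^(N+1)
      = ∑ k ∈ Finset.range (N+2), ((-1:ℂ)^k * ((N+1).choose k : ℂ)) •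
          ((LinearMap.mulLeft ℂ A)^(N+1-k) * (adE A)^k) := by
  have hc : Commute (LinearMap.mulLeft ℂ A) (-(adE A)) := (commute_l_ad A).neg_right
  have hr : LinearMap.mulLeft ℂ A + -(adE A) = LinearMap.mulRight ℂ A := by
    rw [adE]; abel
  rw [← hr, Commute.add_pow hc]
  rw [← Finset.sum_range_reflect]
  apply Finset.sum_congr rfl
  intro k hk
  have hk' : k ≤ N+1 := Nat.lt_succ_iff.mp (Finset.mem_range.mp hk)
  have h1 : N+2-1-k = N+1-k := by omega
  have h2 : N+1-(N+1-k) = k := Nat.sub_sub_self hk'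
  rw [h1, h2, neg_pow_smul]
  rw [Nat.choose_symm hk', mul_smul_comm, smul_mul_assoc, ← nsmul_eq_mul',
    ← Nat.cast_smul_eq_nsmul ℂ, smul_smul]

lemma claim (A : Matrix (Fin n) (Fin n) ℂ) (N : ℕ) :
    ∑ k ∈ Finset.range (N+1), ((-1:ℂ)^k * ((N+1).choose (k+1) : ℂ)) •
        ((LinearMap.mulLeft ℂ A)^(N-k) * (adE A)^k)
      = ∑ i ∈ Finset.range (N+1),
          (LinearMap.mulLeft ℂ A)^i * (LinearMap.mulRight ℂ A)^(N-i) := by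
  induction N with
  | zero => simp; rfl
  | succ N ih =>
    have split : ∀ k ∈ Finset.range (N+2),
        ((-1:ℂ)^k * ((N+2).choose (k+1) : ℂ)) •
            ((LinearMap.mulLeft ℂ A)^(N+1-k) * (adE A)^k)
          = ((-1:ℂ)^k * ((N+1).choose k : ℂ)) •
              ((LinearMap.mulLeft ℂ A)^(N+1-k) * (adE A)^k)
            + ((-1:ℂ)^k * ((N+1).choose (k+1) : ℂ)) •
              ((LinearMap.mulLeft ℂ A)^(N+1-k) * (adE A)^k) := by
      intro k _
      rw [Nat.choose_succ_succ (N+1) k]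
      push_cast
      rw [mul_add, add_smul]
    rw [Finset.sum_congr rfl split, Finset.sum_add_distrib, ← r_pow_eq A N]
    have second : ∑ k ∈ Finset.range (N+2), ((-1:ℂ)^k * ((N+1).choose (k+1) : ℂ)) •
            ((LinearMap.mulLeft ℂ A)^(N+1-k) * (adE A)^k)
        = LinearMap.mulLeft ℂ A *
            ∑ k ∈ Finset.range (N+1), ((-1:ℂ)^k * ((N+1).choose (k+1) : ℂ)) •
              ((LinearMap.mulLeft ℂ A)^(N-k) * (adE A)^k) := by
      rw [Finset.sum_range_succ]
      have hz : ((N+1).choose (N+2) : ℂ) = 0 := by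
        rw [Nat.choose_eq_zero_of_lt (by omega)]; norm_num
      rw [hz, mul_zero, zero_smul, add_zero, Finset.mul_sum]
      apply Finset.sum_congr rfl
      intro k hk
      have hk' : k ≤ N := Nat.lt_succ_iff.mp (Finset.mem_range.mp hk)
      have hp : N+1-k = (N-k)+1 := by omega
      rw [hp, pow_succ', mul_smul_comm, mul_assoc]
    rw [second, ih, Finset.sum_range_succ' _ (N+1)]
    simp only [Nat.succ_sub_succ_eq_sub, Nat.sub_zero, pow_zero, one_mul]
    rw [Finset.mul_sum]
    rw [add_comm]
    congr 1
    apply Finset.sum_congr rfl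
    intro i _
    rw [pow_succ', mul_assoc]

lemma claim_apply (A B : Matrix (Fin n) (Fin n) ℂ) (N : ℕ) :
    ∑ k ∈ Finset.range (N+1), ((-1:ℂ)^k * ((N+1).choose (k+1):ℂ)) •
        (A^(N-k) * (((adE A)^k) B))
      = Sm A B N := by
  have h := LinearMap.congr_fun (claim A N) B
  simp only [LinearMap.sum_apply, LinearMap.smul_apply, Module.End.mul_apply,
    LinearMap.pow_mulLeft, LinearMap.pow_mulRight, LinearMap.mulLeft_apply,
    LinearMap.mulRight_apply, ← mul_assoc] at h
  exact h

lemma coef_eq (N k : ℕ) (hk : k ≤ N) :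
    (((N-k).factorial : ℂ))⁻¹ * ((-1:ℂ)^k / ((k+1).factorial : ℂ))
      = (((N+1).factorial : ℂ))⁻¹ * ((-1:ℂ)^k * ((N+1).choose (k+1) : ℂ)) := by
  have h := Nat.choose_mul_factorial_mul_factorial (Nat.succ_le_succ hk)
  have h2 : (N+1) - (k+1) = N - k := by omega
  rw [h2] at h
  have hc : ((N+1).choose (k+1) : ℂ) * ((k+1).factorial : ℂ) * ((N-k).factorial : ℂ)
      = ((N+1).factorial : ℂ) := by exact_mod_cast congrArg (Nat.cast (R := ℂ)) h
  have f1 : (((N-k).factorial : ℂ)) ≠ 0 := Nat.cast_ne_zero.mpr (Nat.factorial_ne_zero _)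
  have f2 : (((k+1).factorial : ℂ)) ≠ 0 := Nat.cast_ne_zero.mpr (Nat.factorial_ne_zero _)
  have f4 : (((N+1).choose (k+1) : ℂ)) ≠ 0 :=
    Nat.cast_ne_zero.mpr (Nat.choose_pos (Nat.succ_le_succ hk)).ne'
  rw [← hc]
  field_simp

lemma norm_ad_pow_le (A B : E) (k : ℕ) : ‖((adE A)^k) B‖ ≤ (2*‖A‖)^k * ‖B‖ := by
  induction k with
  | zero => simp
  | succ k ih =>
    rw [pow_succ', Module.End.mul_apply, adE_apply]
    calc ‖A * (((adE A)^k) B) - (((adE A)^k) B) * A‖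
        ≤ ‖A * (((adE A)^k) B)‖ + ‖(((adE A)^k) B) * A‖ := norm_sub_le _ _
    _ ≤ ‖A‖ * ‖((adE A)^k) B‖ + ‖((adE A)^k) B‖ * ‖A‖ :=
        add_le_add (norm_mul_le _ _) (norm_mul_le _ _)
    _ = (2*‖A‖) * ‖((adE A)^k) B‖ := by ring
    _ ≤ (2*‖A‖) * ((2*‖A‖)^k * ‖B‖) :=
        mul_le_mul_of_nonneg_left ih (by positivity)
    _ = (2*‖A‖)^(k+1) * ‖B‖ := by rw [pow_succ']; ring

lemma norm_g_le (A B : E) (k : ℕ) :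
    ‖((-1:ℂ)^k / ((k+1).factorial : ℂ)) • (fun Z : E => A*Z - Z*A)^[k] B‖
      ≤ (2*‖A‖)^k / k.factorial * ‖B‖ := by
  rw [ad_iter_eq_pow, norm_smul]
  have hcoef : ‖(-1:ℂ)^k / ((k+1).factorial : ℂ)‖ = (((k+1).factorial : ℝ))⁻¹ := by
    rw [norm_div, norm_pow, norm_neg, norm_one, one_pow]
    norm_num
  rw [hcoef]
  have h2 : (((k+1).factorial : ℝ))⁻¹ ≤ ((k.factorial : ℝ))⁻¹ := by
    apply inv_anti₀
    · exact_mod_cast k.factorial_pos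
    · exact_mod_cast Nat.factorial_le (Nat.le_succ k)
  calc (((k+1).factorial : ℝ))⁻¹ * ‖((adE A)^k) B‖
      ≤ ((k.factorial : ℝ))⁻¹ * ((2*‖A‖)^k * ‖B‖) :=
        mul_le_mul h2 (norm_ad_pow_le A B k) (norm_nonneg _) (by positivity)
  _ = (2*‖A‖)^k / k.factorial * ‖B‖ := by ring

lemma summable_norm_g (A B : E) :
    Summable fun k => ‖((-1:ℂ)^k / ((k+1).factorial : ℂ)) • (fun Z : E => A*Z - Z*A)^[k] B‖ :=
  (summable_fac_pow (2*‖A‖) ‖B‖).of_nonneg_of_le (fun _ => norm_nonneg _) (norm_g_le A B)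

lemma cauchy_term (A B : E) (N : ℕ) :
    ∑ k ∈ Finset.range (N+1), (((k.factorial : ℂ))⁻¹ • A^k) *
        (((-1:ℂ)^(N-k) / (((N-k)+1).factorial : ℂ)) • (fun Z : E => A*Z - Z*A)^[N-k] B)
      = (((N+1).factorial : ℂ))⁻¹ • Sm A B N := by
  rw [← Finset.sum_range_reflect, ← claim_apply A B N, Finset.smul_sum]
  apply Finset.sum_congr rfl
  intro k hk
  have hk' : k ≤ N := Nat.lt_succ_iff.mp (Finset.mem_range.mp hk)
  have h1 : N+1-1-k = N-k := by omega
  have h2 : N-(N-k) = k := Nat.sub_sub_self hk'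
  rw [h1, h2, ad_iter_eq_pow, smul_mul_smul_comm, coef_eq N k hk', mul_smul]

theorem exp_mul_eq_Lc (A B : E) :
    NormedSpace.exp A *
        (∑' k : ℕ, (((-1:ℂ)^k / ((k+1).factorial : ℂ)) • (fun Z : E => A*Z - Z*A)^[k] B))
      = Lc A B := by
  have hf : Summable fun k : ℕ => ‖((k.factorial : ℂ))⁻¹ • A^k‖ :=
    NormedSpace.norm_expSeries_summable' A
  rw [NormedSpace.exp_eq_tsum ℂ]
  rw [tsum_mul_tsum_eq_tsum_sum_range_of_summable_norm hf (summable_norm_g A B)]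
  rw [Lc_apply]
  exact tsum_congr (cauchy_term A B)

end DexpAux

/-- If `X : ℝ → Matrix (Fin n) (Fin n) ℂ` is differentiable at `τ₀` with derivative `X'`,
then `τ ↦ exp(X(τ))` is differentiable at `τ₀` with derivative
`exp(X(τ₀)) * ∑_{k=0}^∞ ((−1)^k/(k+1)!) • (ad_{X(τ₀)})^k(X')`, where `ad_A(Z) = A*Z − Z*A`. -/
theorem hasDerivAt_exp_comp_dexp_formula (n : ℕ) (hn : 1 ≤ n)
    (X : ℝ → Matrix (Fin n) (Fin n) ℂ) (τ₀ : ℝ) (X' : Matrix (Fin n) (Fin n) ℂ)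
    (hX : HasDerivAt X X' τ₀) :
    HasDerivAt (fun τ : ℝ => NormedSpace.exp (X τ))
      (NormedSpace.exp (X τ₀) *
        ∑' k : ℕ, (((-1 : ℂ) ^ k / (Nat.factorial (k + 1) : ℂ)) •
          (fun Z : Matrix (Fin n) (Fin n) ℂ => X τ₀ * Z - Z * X τ₀)^[k] X'))
      τ₀ := by
  have hF := DexpAux.hasFDerivAt_exp (X τ₀)
  have h := hF.comp_hasDerivAt τ₀ hX
  rw [DexpAux.exp_mul_eq_Lc (X τ₀) X']
  exact h
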